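/- For f(x) = x² + 1 and every integer n ≥ 0, the nested derivative at 0 satisfies 𝔇^{2n}[f](0) = (2/(n+1)) · 4^n · (4^{n+1} − 1) · |B_{2(n+1)}|, where B_m denotes the m-th Bernoulli number. -/

import Mathlib

open Filter Topology

/-- The `n`-th nested derivative `𝔇ⁿ[f]`, defined by `𝔇⁰[f] = 1` and
`𝔇ⁿ⁺¹[f] = (f · 𝔇ⁿ[f])'`. -/
noncomputable def nestedDeriv (f : ℝ → ℝ) : ℕ → ℝ → ℝ
  | 0 => fun _ => 1
  | n + 1 => deriv fun x => f x * nestedDeriv f n x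

namespace NDtan

open Polynomial Finset
open scoped Nat

/-- `P n` is the polynomial representing the `n`-th nested derivative of `x²+1`. -/
noncomputable def P : ℕ → ℚ[X]
  | 0 => 1
  | n + 1 => derivative ((X ^ 2 + 1) * P n)

/-- `Q n = (X²+1) * P n`. -/
noncomputable def Q (n : ℕ) : ℚ[X] := (X ^ 2 + 1) * P n

lemma Q_succ (n : ℕ) : Q (n + 1) = (X ^ 2 + 1) * derivative (Q n) := rfl

lemma Q_zero : Q 0 = X ^ 2 + 1 := by simp [Q, P]

/-- Link: the nested derivative is `aeval` of `P n`. -/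
lemma nestedDeriv_eq_aeval (n : ℕ) (x : ℝ) :
    nestedDeriv (fun x : ℝ => x ^ 2 + 1) n x = Polynomial.aeval x (P n) := by
  induction n generalizing x with
  | zero => simp [nestedDeriv, P]
  | succ n ih =>
    have h : (fun y : ℝ => (y ^ 2 + 1) * nestedDeriv (fun x : ℝ => x ^ 2 + 1) n y)
        = fun y => Polynomial.aeval y ((X ^ 2 + 1) * P n) := by
      funext y; rw [ih y]; simp
    show deriv (fun y => (y ^ 2 + 1) * nestedDeriv (fun x : ℝ => x ^ 2 + 1) n y) x = _
    rw [h, Polynomial.deriv_aeval]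
    rfl

/-- The key polynomial identity. -/
lemma Q_identity (n : ℕ) :
    Q (n + 1) = 2 * X * Q n +
      ∑ j ∈ Finset.range n, ((n + 1).choose (j + 1) : ℚ[X]) * (Q j * Q (n - 1 - j)) := by
  induction n with
  | zero =>
    rw [Q_succ, Q_zero]
    simp [derivative_add, derivative_X_pow]
    ring_nf
  | succ n ih =>
    have key : ∀ m, (X ^ 2 + 1) * derivative (Q m) = Q (m + 1) := fun m => (Q_succ m).symm
    have hD : derivative (2 * X * Q n +
        ∑ j ∈ Finset.range n, ((n + 1).choose (j + 1) : ℚ[X]) * (Q j * Q (n - 1 - j)))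
        = 2 * Q n + 2 * X * derivative (Q n) +
          ∑ j ∈ Finset.range n, ((n + 1).choose (j + 1) : ℚ[X]) *
            (derivative (Q j) * Q (n - 1 - j) + Q j * derivative (Q (n - 1 - j))) := by
      rw [derivative_add, derivative_sum]
      congr 1
      · rw [derivative_mul, derivative_mul, derivative_X, derivative_ofNat]; ring
      · exact Finset.sum_congr rfl fun j hj => by
          rw [derivative_mul, derivative_mul, derivative_natCast]; ring
    have hM : Q (n + 2) = 2 * (X ^ 2 + 1) * Q n + 2 * X * Q (n + 1) +
        ∑ j ∈ Finset.range n, ((n + 1).choose (j + 1) : ℚ[X]) *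
          (Q (j + 1) * Q (n - 1 - j) + Q j * Q (n - j)) := by
      conv_lhs => rw [Q_succ (n + 1), ih, hD]
      rw [mul_add, mul_add]
      congr 1
      · congr 1
        · ring
        · rw [show (X ^ 2 + 1) * (2 * X * derivative (Q n))
              = 2 * X * ((X ^ 2 + 1) * derivative (Q n)) by ring, key]
      · rw [Finset.mul_sum]
        refine Finset.sum_congr rfl fun j hj => ?_
        have hj' := Finset.mem_range.1 hj
        rw [show (X ^ 2 + 1) * (((n + 1).choose (j + 1) : ℚ[X]) *
              (derivative (Q j) * Q (n - 1 - j) + Q j * derivative (Q (n - 1 - j))))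
            = ((n + 1).choose (j + 1) : ℚ[X]) *
              (((X ^ 2 + 1) * derivative (Q j)) * Q (n - 1 - j)
                + Q j * ((X ^ 2 + 1) * derivative (Q (n - 1 - j)))) by ring,
          key j, key (n - 1 - j), show n - 1 - j + 1 = n - j by omega]
    rw [hM]
    have hLsplit : ∑ j ∈ Finset.range n, ((n + 1).choose (j + 1) : ℚ[X]) *
          (Q (j + 1) * Q (n - 1 - j) + Q j * Q (n - j))
        = (∑ j ∈ Finset.range n, ((n + 1).choose (j + 1) : ℚ[X]) * (Q (j + 1) * Q (n - 1 - j)))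
          + ∑ j ∈ Finset.range n, ((n + 1).choose (j + 1) : ℚ[X]) * (Q j * Q (n - j)) := by
      rw [← Finset.sum_add_distrib]
      exact Finset.sum_congr rfl fun j _ => by ring
    have h1 : ∑ j ∈ Finset.range (n + 1), ((n + 1).choose j : ℚ[X]) * (Q j * Q (n - j))
        = (∑ j ∈ Finset.range n, ((n + 1).choose (j + 1) : ℚ[X]) * (Q (j + 1) * Q (n - 1 - j)))
          + Q 0 * Q n := by
      rw [Finset.sum_range_succ']
      congr 1
      · exact Finset.sum_congr rfl fun j _ => by rw [show n - 1 - j = n - (j + 1) by omega]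
      · simp
    have h2 : ∑ j ∈ Finset.range (n + 1), ((n + 1).choose (j + 1) : ℚ[X]) * (Q j * Q (n - j))
        = (∑ j ∈ Finset.range n, ((n + 1).choose (j + 1) : ℚ[X]) * (Q j * Q (n - j)))
          + Q n * Q 0 := by
      rw [Finset.sum_range_succ]
      simp
    have hsplit : ∑ j ∈ Finset.range (n + 1),
          ((n + 1 + 1).choose (j + 1) : ℚ[X]) * (Q j * Q (n - j))
        = (∑ j ∈ Finset.range (n + 1), ((n + 1).choose j : ℚ[X]) * (Q j * Q (n - j)))
          + ∑ j ∈ Finset.range (n + 1), ((n + 1).choose (j + 1) : ℚ[X]) * (Q j * Q (n - j)) := by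
      rw [← Finset.sum_add_distrib]
      refine Finset.sum_congr rfl fun j _ => ?_
      rw [show ((n + 1 + 1).choose (j + 1) : ℚ[X])
          = ((n + 1).choose j : ℚ[X]) + ((n + 1).choose (j + 1) : ℚ[X]) by
        rw [Nat.choose_succ_succ]; push_cast; ring]
      ring
    simp only [Nat.add_sub_cancel]
    rw [hsplit, h1, h2, hLsplit, Q_zero]
    ring

/-- Scalar sequence. -/
noncomputable def a (n : ℕ) : ℚ := (Q n).eval 0

lemma a_zero : a 0 = 1 := by simp [a, Q_zero]

lemma a_succ (n : ℕ) :
    a (n + 1) = ∑ j ∈ Finset.range n, ((n + 1).choose (j + 1) : ℚ) * (a j * a (n - 1 - j)) := by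
  simp [a, Q_identity n, eval_finset_sum]

lemma a_nonneg (n : ℕ) : 0 ≤ a n := by
  induction n using Nat.strong_induction_on with
  | _ n ih =>
    match n with
    | 0 => rw [a_zero]; norm_num
    | m + 1 =>
      rw [a_succ]
      refine Finset.sum_nonneg fun j hj => ?_
      have hj' := Finset.mem_range.1 hj
      have h1 := ih j (by omega)
      have h2 := ih (m - 1 - j) (by omega)
      positivity

/-- Formal tangent series over ℂ. -/
noncomputable def T : PowerSeries ℂ :=
  PowerSeries.mk fun n => if n = 0 then 0 else ((a (n - 1) : ℂ)) / (n ! : ℂ)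

lemma T_deriv : PowerSeries.derivative ℂ T = 1 + T * T := by
  ext n
  rw [PowerSeries.coeff_derivative]
  simp only [T, PowerSeries.coeff_mk, map_add, PowerSeries.coeff_one, PowerSeries.coeff_mul,
    Nat.sum_antidiagonal_eq_sum_range_succ_mk]
  cases n with
  | zero =>
    simp [a_zero]
  | succ m =>
    rw [if_neg (show ¬ m + 1 + 1 = 0 by omega), if_neg (Nat.succ_ne_zero m), zero_add,
      Finset.sum_range_succ', Finset.sum_range_succ]
    rw [if_pos rfl, zero_mul, if_pos (show m + 1 - (m + 1) = 0 by omega), mul_zero, add_zero,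
      add_zero]
    have hstep : ∀ k ∈ Finset.range m,
        (if k + 1 = 0 then 0 else ((a (k + 1 - 1) : ℂ)) / ((k + 1)! : ℂ)) *
          (if m + 1 - (k + 1) = 0 then 0
            else ((a (m + 1 - (k + 1) - 1) : ℂ)) / ((m + 1 - (k + 1))! : ℂ))
        = ((a k : ℂ)) / ((k + 1)! : ℂ) * (((a (m - 1 - k) : ℂ)) / ((m - k)! : ℂ)) := by
      intro k hk
      have hk' := Finset.mem_range.1 hk
      rw [if_neg (Nat.succ_ne_zero k), if_neg (show ¬ m + 1 - (k + 1) = 0 by omega),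
        show k + 1 - 1 = k from rfl, show m + 1 - (k + 1) = m - k by omega,
        show m - k - 1 = m - 1 - k by omega]
    rw [Finset.sum_congr rfl hstep]
    have hfact : ((m + 1 + 1)! : ℂ) = (((m + 1 : ℕ) : ℂ) + 1) * ((m + 1)! : ℂ) := by
      rw [Nat.factorial_succ]; push_cast; ring
    have h1 : ((m + 1 : ℕ) : ℂ) + 1 ≠ 0 := Nat.cast_add_one_ne_zero _
    have h2 : ((m + 1)! : ℂ) ≠ 0 := Nat.cast_ne_zero.2 (Nat.factorial_ne_zero _)
    have hL : ((a (m + 1) : ℂ)) / ((m + 1 + 1)! : ℂ) * (((m + 1 : ℕ) : ℂ) + 1)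
        = ((a (m + 1) : ℂ)) / ((m + 1)! : ℂ) := by
      rw [hfact, show ((a (m + 1) : ℂ)) / ((((m + 1 : ℕ) : ℂ) + 1) * ((m + 1)! : ℂ))
          * (((m + 1 : ℕ) : ℂ) + 1) = (((m + 1 : ℕ) : ℂ) + 1) * ((a (m + 1) : ℂ))
          / ((((m + 1 : ℕ) : ℂ) + 1) * ((m + 1)! : ℂ)) by ring]
      exact mul_div_mul_left _ _ h1
    rw [show m + 1 + 1 - 1 = m + 1 from rfl, hL]
    rw [show ((a (m + 1) : ℚ) : ℂ) = ((∑ j ∈ Finset.range m,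
        ((m + 1).choose (j + 1) : ℚ) * (a j * a (m - 1 - j)) : ℚ) : ℂ) by rw [← a_succ]]
    push_cast
    rw [Finset.sum_div]
    refine Finset.sum_congr rfl fun k hk => ?_
    have hk' := Finset.mem_range.1 hk
    have hc : (((m + 1).choose (k + 1) : ℕ) : ℂ) * ((k + 1)! : ℂ) * ((m - k)! : ℂ)
        = ((m + 1)! : ℂ) := by
      have := Nat.choose_mul_factorial_mul_factorial (show k + 1 ≤ m + 1 by omega)
      rw [show m + 1 - (k + 1) = m - k by omega] at this
      exact_mod_cast congrArg (Nat.cast : ℕ → ℂ) this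
    have hk1 : ((k + 1)! : ℂ) ≠ 0 := Nat.cast_ne_zero.2 (Nat.factorial_ne_zero _)
    have hk2 : ((m - k)! : ℂ) ≠ 0 := Nat.cast_ne_zero.2 (Nat.factorial_ne_zero _)
    field_simp
    linear_combination ((a k : ℂ)) * ((a (m - 1 - k) : ℂ)) * hc

private lemma fact_helper (j m : ℕ) :
    (((-1 : ℚ) ^ j / ((m + 1)! : ℚ)) : ℂ) * ((m : ℂ) + 1)
      = (((-1 : ℚ) ^ j / (m ! : ℚ)) : ℂ) := by
  rw [Nat.factorial_succ]
  have hm : (m : ℂ) + 1 ≠ 0 := Nat.cast_add_one_ne_zero m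
  have hf : ((m ! : ℕ) : ℂ) ≠ 0 := Nat.cast_ne_zero.2 (Nat.factorial_ne_zero _)
  push_cast
  field_simp

lemma sin_deriv : PowerSeries.derivative ℂ (PowerSeries.sin ℂ) = PowerSeries.cos ℂ := by
  ext n
  rw [PowerSeries.coeff_derivative]
  simp only [PowerSeries.sin, PowerSeries.cos, PowerSeries.coeff_mk]
  rcases Nat.even_or_odd n with he | ho
  · obtain ⟨k, rfl⟩ := he
    rw [if_neg (by rintro ⟨r, hr⟩; omega), if_pos ⟨k, rfl⟩]
    rw [eq_ratCast, eq_ratCast]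
    have h1 : (k + k + 1) / 2 = k := by omega
    have h2 : (k + k) / 2 = k := by omega
    rw [h1, h2]
    have := fact_helper k (k + k)
    push_cast at this ⊢
    convert this using 2
  · obtain ⟨k, rfl⟩ := ho
    rw [if_pos ⟨k + 1, by ring⟩, if_neg (by rintro ⟨r, hr⟩; omega)]
    simp

lemma cos_deriv : PowerSeries.derivative ℂ (PowerSeries.cos ℂ) = -(PowerSeries.sin ℂ) := by
  ext n
  rw [PowerSeries.coeff_derivative]
  simp only [PowerSeries.sin, PowerSeries.cos, PowerSeries.coeff_mk, map_neg]
  rcases Nat.even_or_odd n with he | ho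
  · obtain ⟨k, rfl⟩ := he
    rw [if_neg (by rintro ⟨r, hr⟩; omega), if_pos ⟨k, rfl⟩]
    simp
  · obtain ⟨k, rfl⟩ := ho
    rw [if_pos ⟨k + 1, by ring⟩, if_neg (by rintro ⟨r, hr⟩; omega)]
    rw [eq_ratCast, eq_ratCast]
    have h1 : (2 * k + 1 + 1) / 2 = k + 1 := by omega
    have h2 : (2 * k + 1) / 2 = k := by omega
    rw [h1, h2]
    have := fact_helper (k + 1) (2 * k + 1)
    rw [pow_succ] at this
    push_cast at this ⊢
    linear_combination this

lemma T_mul_cos : T * PowerSeries.cos ℂ = PowerSeries.sin ℂ := by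
  have hH : PowerSeries.derivative ℂ (PowerSeries.sin ℂ - T * PowerSeries.cos ℂ)
      = T * (PowerSeries.sin ℂ - T * PowerSeries.cos ℂ) := by
    rw [map_sub, sin_deriv, Derivation.leibniz, T_deriv, cos_deriv, smul_eq_mul, smul_eq_mul]
    ring
  have hzero : ∀ n, PowerSeries.coeff n (PowerSeries.sin ℂ - T * PowerSeries.cos ℂ) = 0 := by
    intro n
    induction n using Nat.strong_induction_on with
    | _ n ih =>
      match n with
      | 0 =>
        simp [PowerSeries.coeff_mul, T, PowerSeries.sin, PowerSeries.coeff_mk]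
      | n + 1 =>
        have h := congrArg (PowerSeries.coeff n) hH
        rw [PowerSeries.coeff_derivative, PowerSeries.coeff_mul,
          Nat.sum_antidiagonal_eq_sum_range_succ_mk] at h
        have hs : ∑ k ∈ Finset.range (n + 1), PowerSeries.coeff k T *
            PowerSeries.coeff (n - k) (PowerSeries.sin ℂ - T * PowerSeries.cos ℂ) = 0 :=
          Finset.sum_eq_zero fun k hk => by rw [ih (n - k) (by omega), mul_zero]
        rw [hs] at h
        have hn : ((n : ℂ) + 1) ≠ 0 := Nat.cast_add_one_ne_zero n
        exact (mul_eq_zero.1 h).resolve_right hn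
  have : PowerSeries.sin ℂ - T * PowerSeries.cos ℂ = 0 := PowerSeries.ext fun n => by
    rw [hzero n, map_zero]
  exact (sub_eq_zero.1 this).symm

lemma exp_I : PowerSeries.rescale Complex.I (PowerSeries.exp ℂ)
    = PowerSeries.cos ℂ + (PowerSeries.C (R := ℂ)) Complex.I * PowerSeries.sin ℂ := by
  ext n
  rw [map_add, PowerSeries.coeff_rescale, PowerSeries.coeff_exp, PowerSeries.coeff_C_mul]
  simp only [PowerSeries.sin, PowerSeries.cos, PowerSeries.coeff_mk]
  rcases Nat.even_or_odd n with he | ho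
  · obtain ⟨k, rfl⟩ := he
    rw [if_pos ⟨k, rfl⟩, if_pos ⟨k, rfl⟩, mul_zero, add_zero]
    rw [show (k + k) / 2 = k by omega, show k + k = 2 * k by omega, pow_mul, Complex.I_sq]
    rw [eq_ratCast, eq_ratCast]
    push_cast
    ring
  · obtain ⟨k, rfl⟩ := ho
    rw [if_neg (by rintro ⟨r, hr⟩; omega), if_neg (by rintro ⟨r, hr⟩; omega), zero_add]
    rw [show (2 * k + 1) / 2 = k by omega, pow_succ, pow_mul, Complex.I_sq]
    rw [eq_ratCast, eq_ratCast]
    push_cast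
    ring

lemma exp_negI : PowerSeries.rescale (-Complex.I) (PowerSeries.exp ℂ)
    = PowerSeries.cos ℂ - (PowerSeries.C (R := ℂ)) Complex.I * PowerSeries.sin ℂ := by
  ext n
  rw [map_sub, PowerSeries.coeff_rescale, PowerSeries.coeff_exp, PowerSeries.coeff_C_mul]
  simp only [PowerSeries.sin, PowerSeries.cos, PowerSeries.coeff_mk]
  rcases Nat.even_or_odd n with he | ho
  · obtain ⟨k, rfl⟩ := he
    rw [if_pos ⟨k, rfl⟩, if_pos ⟨k, rfl⟩, mul_zero, sub_zero]
    rw [show (k + k) / 2 = k by omega, show k + k = 2 * k by omega, pow_mul, neg_sq,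
      Complex.I_sq]
    rw [eq_ratCast, eq_ratCast]
    push_cast
    ring
  · obtain ⟨k, rfl⟩ := ho
    rw [if_neg (by rintro ⟨r, hr⟩; omega), if_neg (by rintro ⟨r, hr⟩; omega), zero_sub]
    rw [show (2 * k + 1) / 2 = k by omega, pow_succ, pow_mul, neg_sq, Complex.I_sq]
    rw [eq_ratCast, eq_ratCast]
    push_cast
    ring

lemma key :
    PowerSeries.X * T + PowerSeries.rescale (4 * Complex.I) (bernoulliPowerSeries ℂ)
      + (PowerSeries.C (R := ℂ)) Complex.I * PowerSeries.X
      = PowerSeries.rescale (2 * Complex.I) (bernoulliPowerSeries ℂ) := by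
  set i := Complex.I
  set s := PowerSeries.sin ℂ
  set c := PowerSeries.cos ℂ
  set G2 := PowerSeries.rescale (2 * i) (bernoulliPowerSeries ℂ)
  set G4 := PowerSeries.rescale (4 * i) (bernoulliPowerSeries ℂ)
  set E2 := PowerSeries.rescale (2 * i) (PowerSeries.exp ℂ) with hE2d
  set E4 := PowerSeries.rescale (4 * i) (PowerSeries.exp ℂ) with hE4d
  set e : PowerSeries ℂ := c + (PowerSeries.C (R := ℂ)) i * s with he_def
  have hI2 : ((PowerSeries.C (R := ℂ)) i) ^ 2 = -1 := by
    rw [← map_pow, Complex.I_sq, map_neg, map_one]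
  have hEe : PowerSeries.rescale i (PowerSeries.exp ℂ) = e := exp_I
  have hPyth : c ^ 2 + s ^ 2 = 1 := by
    have h := PowerSeries.exp_mul_exp_eq_exp_add i (-i)
    rw [add_neg_cancel, PowerSeries.rescale_zero, exp_I, exp_negI] at h
    simp only [RingHom.comp_apply, PowerSeries.constantCoeff_exp, map_one] at h
    linear_combination h + s ^ 2 * hI2
  have hE2 : E2 = e ^ 2 := by
    have h := PowerSeries.exp_mul_exp_eq_exp_add i i
    rw [hEe, show i + i = 2 * i by ring, ← hE2d] at h
    rw [← h]; ring
  have hE4 : E4 = E2 * E2 := by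
    have h := PowerSeries.exp_mul_exp_eq_exp_add (2 * i) (2 * i)
    rw [show 2 * i + 2 * i = 4 * i by ring, ← hE2d, ← hE4d] at h
    exact h.symm
  have hu : E2 - 1 = 2 * (PowerSeries.C (R := ℂ)) i * s * e := by
    rw [hE2, he_def]
    linear_combination hPyth - s ^ 2 * hI2
  have he1 : E2 + 1 = 2 * c * e := by
    rw [hE2, he_def]
    linear_combination - hPyth + s ^ 2 * hI2
  have hEbar : e * (c - (PowerSeries.C (R := ℂ)) i * s) = 1 := by
    rw [he_def]
    linear_combination hPyth - s ^ 2 * hI2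
  have hv2 : E4 - 1 = 4 * (PowerSeries.C (R := ℂ)) i * s * c * e ^ 2 := by
    have : E4 - 1 = (E2 - 1) * (E2 + 1) := by rw [hE4]; ring
    rw [this, hu, he1]; ring
  -- Bernoulli relations
  have hr : ∀ z : ℂ, PowerSeries.rescale z (bernoulliPowerSeries ℂ) *
      (PowerSeries.rescale z (PowerSeries.exp ℂ) - 1) = (PowerSeries.C (R := ℂ)) z * PowerSeries.X := by
    intro z
    have h := congrArg (PowerSeries.rescale z) (bernoulliPowerSeries_mul_exp_sub_one ℂ)
    rw [map_mul, map_sub, map_one, PowerSeries.rescale_X] at h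
    exact h
  have r3 : G2 * (E2 - 1) = 2 * (PowerSeries.C (R := ℂ)) i * PowerSeries.X := by
    have := hr (2 * i)
    rw [show (PowerSeries.C (R := ℂ)) (2 * i) = 2 * (PowerSeries.C (R := ℂ)) i by
      rw [map_mul, map_ofNat]] at this
    exact this
  have r4 : G4 * (E4 - 1) = 4 * (PowerSeries.C (R := ℂ)) i * PowerSeries.X := by
    have := hr (4 * i)
    rw [show (PowerSeries.C (R := ℂ)) (4 * i) = 4 * (PowerSeries.C (R := ℂ)) i by
      rw [map_mul, map_ofNat]] at this
    exact this
  rw [hu] at r3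
  rw [hv2] at r4
  -- nonvanishing
  have hne2 : E2 - 1 ≠ 0 := by
    intro h
    have h1 : PowerSeries.coeff 1 (E2 - 1) = 2 * i := by
      rw [map_sub, PowerSeries.coeff_rescale, PowerSeries.coeff_exp, PowerSeries.coeff_one]
      norm_num [Nat.factorial]
    rw [h, map_zero] at h1
    have : i ≠ 0 := Complex.I_ne_zero
    simp at h1
    exact this h1
  have hne4 : E4 - 1 ≠ 0 := by
    intro h
    have h1 : PowerSeries.coeff 1 (E4 - 1) = 4 * i := by
      rw [map_sub, PowerSeries.coeff_rescale, PowerSeries.coeff_exp, PowerSeries.coeff_one]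
      norm_num [Nat.factorial]
    rw [h, map_zero] at h1
    have : i ≠ 0 := Complex.I_ne_zero
    simp at h1
    exact this h1
  refine mul_right_cancel₀ (b := (E2 - 1) * (E4 - 1)) (mul_ne_zero hne2 hne4) ?_
  rw [hu, hv2]
  have hTC : T * c = s := T_mul_cos
  linear_combination (2 * (PowerSeries.C (R := ℂ)) i * s * e) * r4
    - (4 * (PowerSeries.C (R := ℂ)) i * s * c * e ^ 2) * r3
    + (8 * ((PowerSeries.C (R := ℂ)) i) ^ 2 * s ^ 2 * e ^ 3 * PowerSeries.X) * hTC
    + (8 * ((PowerSeries.C (R := ℂ)) i) ^ 2 * s * e * PowerSeries.X *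
        ((PowerSeries.C (R := ℂ)) i * s * e - 1)) * hEbar
    + (8 * ((PowerSeries.C (R := ℂ)) i) ^ 2 * s ^ 3 * e ^ 3 * PowerSeries.X) * hI2

lemma a_eval (n : ℕ) :
    (a (2 * n) : ℚ) * (2 * (n : ℚ) + 2)
      = (-1) ^ n * (16 ^ (n + 1) - 4 ^ (n + 1)) * _root_.bernoulli (2 * n + 2) := by
  have hC := congrArg (PowerSeries.coeff (2 * n + 2)) key
  rw [map_add, map_add] at hC
  rw [show 2 * n + 2 = (2 * n + 1) + 1 from rfl, PowerSeries.coeff_succ_X_mul] at hC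
  rw [PowerSeries.coeff_C_mul, PowerSeries.coeff_X, if_neg (by omega), mul_zero, add_zero] at hC
  rw [PowerSeries.coeff_rescale, PowerSeries.coeff_rescale] at hC
  simp only [bernoulliPowerSeries, PowerSeries.coeff_mk, T] at hC
  rw [if_neg (by omega : ¬ 2 * n + 1 = 0)] at hC
  rw [show (4 * Complex.I) ^ (2 * n + 1 + 1) = (-16 : ℂ) ^ (n + 1) by
      rw [show 2 * n + 1 + 1 = 2 * (n + 1) by ring, pow_mul,
        show (4 * Complex.I) ^ 2 = -16 by rw [mul_pow, Complex.I_sq]; norm_num],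
    show (2 * Complex.I) ^ (2 * n + 1 + 1) = (-4 : ℂ) ^ (n + 1) by
      rw [show 2 * n + 1 + 1 = 2 * (n + 1) by ring, pow_mul,
        show (2 * Complex.I) ^ 2 = -4 by rw [mul_pow, Complex.I_sq]; norm_num]] at hC
  simp only [eq_ratCast] at hC
  rw [show 2 * n + 1 - 1 = 2 * n from rfl] at hC
  have hq : (a (2 * n) : ℚ) / ((2 * n + 1)! : ℚ)
      + (-16) ^ (n + 1) * (_root_.bernoulli (2 * n + 1 + 1) / ((2 * n + 1 + 1)! : ℚ))
      = (-4) ^ (n + 1) * (_root_.bernoulli (2 * n + 1 + 1) / ((2 * n + 1 + 1)! : ℚ)) := by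
    exact_mod_cast hC
  have hfs : ((2 * n + 1 + 1)! : ℚ) = (2 * (n : ℚ) + 2) * ((2 * n + 1)! : ℚ) := by
    rw [Nat.factorial_succ]; push_cast; ring
  have hf1 : ((2 * n + 1)! : ℚ) ≠ 0 := Nat.cast_ne_zero.2 (Nat.factorial_ne_zero _)
  have hf2 : (2 * (n : ℚ) + 2) ≠ 0 := by positivity
  rw [hfs] at hq
  rw [show 2 * n + 2 = 2 * n + 1 + 1 from rfl]
  field_simp at hq
  rw [show ((-16 : ℚ)) ^ (n + 1) = (-1) ^ (n + 1) * 16 ^ (n + 1) by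
      rw [← neg_one_mul (16 : ℚ), mul_pow],
    show ((-4 : ℚ)) ^ (n + 1) = (-1) ^ (n + 1) * 4 ^ (n + 1) by
      rw [← neg_one_mul (4 : ℚ), mul_pow]] at hq
  refine mul_left_cancel₀ (a := (2 * (n : ℚ) + 2) * ((2 * n + 1)! : ℚ) ^ 2)
    (by positivity) ?_
  linear_combination (2 * (n : ℚ) + 2) * ((2 * n + 1)! : ℚ) ^ 2 * hq

end NDtan

/-- For `f(x) = x² + 1` and every `n ≥ 0`,
`𝔇²ⁿ[f](0) = (2/(n+1)) · 4ⁿ · (4ⁿ⁺¹ - 1) · |B₂₍ₙ₊₁₎|`,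
where `Bₘ` is the `m`-th Bernoulli number. -/
theorem nested_deriv_tan_bernoulli :
    ∀ n : ℕ, nestedDeriv (fun x : ℝ => x ^ 2 + 1) (2 * n) 0 =
      2 / ((n : ℝ) + 1) * 4 ^ n * (4 ^ (n + 1) - 1) *
        |((bernoulli (2 * (n + 1)) : ℚ) : ℝ)| := by
  intro n
  rw [NDtan.nestedDeriv_eq_aeval]
  have h0 : Polynomial.aeval (0 : ℝ) (NDtan.P (2 * n)) = ((NDtan.a (2 * n) : ℚ) : ℝ) := by
    rw [Polynomial.aeval_def, Polynomial.eval₂_at_zero, Polynomial.coeff_zero_eq_eval_zero,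
      eq_ratCast]
    norm_cast
    simp [NDtan.a, NDtan.Q]
  rw [h0]
  have hc : (0 : ℝ) < 2 * (n : ℝ) + 2 := by positivity
  have hA : ((NDtan.a (2 * n) : ℚ) : ℝ) * (2 * (n : ℝ) + 2)
      = (-1) ^ n * (16 ^ (n + 1) - 4 ^ (n + 1)) * ((bernoulli (2 * n + 2) : ℚ) : ℝ) := by
    have := NDtan.a_eval n
    have h2 := congrArg (fun q : ℚ => (q : ℝ)) this
    push_cast at h2 ⊢
    convert h2 using 2
  have hpow : (4 : ℝ) ^ (n + 1) ≤ 16 ^ (n + 1) := by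
    apply pow_le_pow_left₀ (by norm_num) (by norm_num)
  have hAnn : (0 : ℝ) ≤ ((NDtan.a (2 * n) : ℚ) : ℝ) := by exact_mod_cast NDtan.a_nonneg (2 * n)
  have habs : ((NDtan.a (2 * n) : ℚ) : ℝ) * (2 * (n : ℝ) + 2)
      = (16 ^ (n + 1) - 4 ^ (n + 1)) * |((bernoulli (2 * n + 2) : ℚ) : ℝ)| := by
    have h1 : ((NDtan.a (2 * n) : ℚ) : ℝ) * (2 * (n : ℝ) + 2)
        = |((NDtan.a (2 * n) : ℚ) : ℝ) * (2 * (n : ℝ) + 2)| :=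
      (abs_of_nonneg (by positivity)).symm
    rw [h1, hA, abs_mul, abs_mul, abs_pow, abs_neg, abs_one, one_pow, one_mul,
      abs_of_nonneg (by linarith : (0:ℝ) ≤ 16 ^ (n + 1) - 4 ^ (n + 1))]
  have hD : (2 / ((n : ℝ) + 1) * 4 ^ n * (4 ^ (n + 1) - 1)) * (2 * (n : ℝ) + 2)
      = 16 ^ (n + 1) - 4 ^ (n + 1) := by
    have hn1 : ((n : ℝ) + 1) ≠ 0 := by positivity
    field_simp
    rw [show (16 : ℝ) = 4 * 4 by norm_num, mul_pow]
    ring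
  refine mul_right_cancel₀ (ne_of_gt hc) ?_
  rw [show 2 * (n + 1) = 2 * n + 2 by ring, habs]
  rw [show 2 / ((n : ℝ) + 1) * 4 ^ n * (4 ^ (n + 1) - 1)
        * |((bernoulli (2 * n + 2) : ℚ) : ℝ)| * (2 * (n : ℝ) + 2)
      = (2 / ((n : ℝ) + 1) * 4 ^ n * (4 ^ (n + 1) - 1) * (2 * (n : ℝ) + 2))
        * |((bernoulli (2 * n + 2) : ℚ) : ℝ)| by ring, hD]
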